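/- Let H be a locally compact second countable group with left Haar measure λ_H, and let ψ : H → ℝ_{>0} be a continuous group homomorphism into the multiplicative group of positive reals such that ∫_H ψ dλ_H < ∞. Then H is compact. -/

import Mathlib

open MeasureTheory

/-- An lcsc group admitting a Haar-integrable continuous homomorphism into
`ℝ_{>0}` is compact. -/
theorem lcsc_compact_of_integrable_continuous_hom
    {H : Type*} [Group H] [TopologicalSpace H] [IsTopologicalGroup H]
    [LocallyCompactSpace H] [SecondCountableTopology H]
    [MeasurableSpace H] [BorelSpace H]
    (lamH : Measure H) [lamH.IsHaarMeasure]
    (ψ : H → ℝ) (hψcont : Continuous ψ) (hψpos : ∀ h, 0 < ψ h)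
    (hψhom : ∀ a b : H, ψ (a * b) = ψ a * ψ b)
    (hint : Integrable ψ lamH) : CompactSpace H := by
  have hIpos : 0 < ∫ x, ψ x ∂lamH := by
    rw [integral_pos_iff_support_of_nonneg (fun x => (hψpos x).le) hint]
    have : Function.support ψ = Set.univ := by
      ext x; simp [Function.mem_support, (hψpos x).ne']
    rw [this]
    simpa using (NeZero.ne lamH)
  have hψone : ∀ g, ψ g = 1 := by
    intro g
    have h1 := integral_mul_left_eq_self (μ := lamH) ψ g
    have h2 : ∫ x, ψ (g * x) ∂lamH = ψ g * ∫ x, ψ x ∂lamH := by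
      simp_rw [hψhom g]
      exact integral_const_mul (ψ g) ψ
    rw [h2] at h1
    have h3 : ψ g * ∫ x, ψ x ∂lamH = 1 * ∫ x, ψ x ∂lamH := by rw [one_mul, h1]
    exact mul_right_cancel₀ hIpos.ne' h3
  have hψeq : ψ = fun _ => (1 : ℝ) := funext hψone
  rw [hψeq] at hint
  have hfin : lamH Set.univ < ⊤ := by
    have := (integrable_const_iff (c := (1 : ℝ))).mp hint
    rcases this with h | h
    · exact absurd h one_ne_zero
    · exact h.measure_univ_lt_top
  by_contra hc
  have : NoncompactSpace H := not_compactSpace_iff.mp hc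
  have := measure_univ_of_isMulLeftInvariant lamH
  rw [this] at hfin
  exact lt_irrefl _ hfin
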